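/- Let σ: M → Mat(n,m) be smooth on an open set M ⊆ ℝⁿ and let V = (Y,C,τ,H) be an infinitesimal stochastic transformation satisfying the second determining equation [Y,σ] + ½τσ + σ·C = 0 and with H = σᵀ·∇k for a smooth function k: M → ℝ. If a smooth function k̄: M → ℝ satisfies Y(k̄) = −k on M, then Y(σᵀ·∇k̄) + ½τ·σᵀ·∇k̄ − C·σᵀ·∇k̄ + σᵀ·∇k = 0 on M; i.e. h = σᵀ·∇k̄ solves the straightening equation Y(h) = (−τ/2 + C)·h − H. -/

import Mathlib

open Matrix
open Topology


/-- Partial derivative `∂ᵢ f` of a scalar function on `ℝⁿ`. -/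
noncomputable def pd {n : ℕ} (i : Fin n) (f : (Fin n → ℝ) → ℝ) (x : Fin n → ℝ) : ℝ :=
  fderiv ℝ f x (Pi.single i 1)

/-- Action `Y(f) = Yⁱ ∂ᵢ f` of a vector field on a scalar function. -/
noncomputable def vfd {n : ℕ} (Y : (Fin n → ℝ) → Fin n → ℝ)
    (f : (Fin n → ℝ) → ℝ) (x : Fin n → ℝ) : ℝ :=
  ∑ j, Y x j * pd j f x

/-- Infinitesimal generator `L(f) = ½ (σσᵀ)^{ij} ∂ᵢ∂ⱼ f + μⁱ ∂ᵢ f` of the SDE `(μ,σ)`. -/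
noncomputable def gen {n m : ℕ} (μ : (Fin n → ℝ) → Fin n → ℝ)
    (σ : (Fin n → ℝ) → Matrix (Fin n) (Fin m) ℝ)
    (f : (Fin n → ℝ) → ℝ) (x : Fin n → ℝ) : ℝ :=
  (1 / 2) * ∑ i, ∑ j, (∑ α, σ x i α * σ x j α) * pd i (pd j f) x
    + ∑ i, μ x i * pd i f x

/-- Entrywise smoothness of a vector-valued function on a set. -/
def SmoothVec {n k : ℕ} (M : Set (Fin n → ℝ)) (f : (Fin n → ℝ) → Fin k → ℝ) : Prop :=
  ∀ i, ContDiffOn ℝ (⊤ : ℕ∞) (fun x => f x i) M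

/-- Entrywise smoothness of a matrix-valued function on a set. -/
def SmoothMat {n k l : ℕ} (M : Set (Fin n → ℝ))
    (f : (Fin n → ℝ) → Matrix (Fin k) (Fin l) ℝ) : Prop :=
  ∀ i j, ContDiffOn ℝ (⊤ : ℕ∞) (fun x => f x i j) M

lemma pd_congr_nhds {n : ℕ} {i : Fin n} {f g : (Fin n → ℝ) → ℝ} {x : Fin n → ℝ}
    (h : f =ᶠ[𝓝 x] g) : pd i f x = pd i g x := by
  unfold pd; rw [Filter.EventuallyEq.fderiv_eq h]

lemma pd_sum {n N : ℕ} (i : Fin n) (f : Fin N → (Fin n → ℝ) → ℝ) (x : Fin n → ℝ)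
    (h : ∀ p, DifferentiableAt ℝ (f p) x) :
    pd i (fun y => ∑ p, f p y) x = ∑ p, pd i (f p) x := by
  unfold pd
  rw [fderiv_fun_sum (fun p _ => h p)]
  simp

lemma pd_mul {n : ℕ} (i : Fin n) (f g : (Fin n → ℝ) → ℝ) (x : Fin n → ℝ)
    (hf : DifferentiableAt ℝ f x) (hg : DifferentiableAt ℝ g x) :
    pd i (fun y => f y * g y) x = pd i f x * g x + f x * pd i g x := by
  unfold pd
  rw [fderiv_fun_mul hf hg]
  simp; ring

lemma pd_neg {n : ℕ} (i : Fin n) (f : (Fin n → ℝ) → ℝ) (x : Fin n → ℝ) :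
    pd i (fun y => -(f y)) x = -pd i f x := by
  unfold pd; rw [fderiv_fun_neg]; simp

lemma pd_smooth {n : ℕ} {M : Set (Fin n → ℝ)} (hM : IsOpen M)
    {f : (Fin n → ℝ) → ℝ} (hf : ContDiffOn ℝ (⊤ : ℕ∞) f M) (j : Fin n) :
    ContDiffOn ℝ (⊤ : ℕ∞) (pd j f) M := by
  have h1 : ContDiffOn ℝ (⊤ : ℕ∞) (fderiv ℝ f) M :=
    hf.fderiv_of_isOpen hM (by exact_mod_cast le_top)
  exact h1.clm_apply contDiffOn_const

lemma pd_comm {n : ℕ} {M : Set (Fin n → ℝ)} (hM : IsOpen M)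
    {f : (Fin n → ℝ) → ℝ} (hf : ContDiffOn ℝ (⊤ : ℕ∞) f M)
    {x : Fin n → ℝ} (hx : x ∈ M) (i j : Fin n) :
    pd i (pd j f) x = pd j (pd i f) x := by
  have hf1 : ContDiffOn ℝ (⊤ : ℕ∞) (fderiv ℝ f) M :=
    hf.fderiv_of_isOpen hM (by exact_mod_cast le_top)
  have hder : ∀ᶠ y in 𝓝 x, HasFDerivAt f (fderiv ℝ f y) y := by
    filter_upwards [hM.mem_nhds hx] with y hy
    exact ((hf.differentiableOn (by simp)).differentiableAt
      (hM.mem_nhds hy)).hasFDerivAt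
  have hdc : DifferentiableAt ℝ (fderiv ℝ f) x :=
    (hf1.differentiableOn (by simp)).differentiableAt (hM.mem_nhds hx)
  have hx2 : HasFDerivAt (fderiv ℝ f) (fderiv ℝ (fderiv ℝ f) x) x := hdc.hasFDerivAt
  have hsymm := second_derivative_symmetric_of_eventually hder hx2
    (Pi.single i (1:ℝ)) (Pi.single j (1:ℝ))
  have key : ∀ u v : Fin n, pd u (pd v f) x
      = fderiv ℝ (fderiv ℝ f) x (Pi.single u 1) (Pi.single v 1) := by
    intro u v
    have hrf : pd v f = fun y => fderiv ℝ f y (Pi.single v 1) := rfl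
    simp only [pd, hrf]
    rw [fderiv_clm_apply hdc (differentiableAt_const _)]
    simp
  rw [key i j, key j i, hsymm]


/-- If `V = (Y,C,τ,H)` satisfies the second determining equation `[Y,σ] + ½τσ + σ·C = 0`
with `H = σᵀ·∇k`, and `Y(k̄) = −k` on `M`, then `h = σᵀ·∇k̄` solves the straightening
equation `Y(h) = (−τ/2 + C)·h − H`, i.e.
`Y(σᵀ·∇k̄) + ½τ·σᵀ·∇k̄ − C·σᵀ·∇k̄ + σᵀ·∇k = 0` on `M`. -/
theorem statement16 {n m : ℕ} (M : Set (Fin n → ℝ)) (hM : IsOpen M)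
    (σ : (Fin n → ℝ) → Matrix (Fin n) (Fin m) ℝ) (hσ : SmoothMat M σ)
    (Y : (Fin n → ℝ) → Fin n → ℝ) (C : (Fin n → ℝ) → Matrix (Fin m) (Fin m) ℝ)
    (τ : (Fin n → ℝ) → ℝ)
    (hY : SmoothVec M Y) (hCs : SmoothMat M C) (hτ : ContDiffOn ℝ (⊤ : ℕ∞) τ M)
    (hC : ∀ x ∈ M, (C x)ᵀ = -(C x))
    (k kbar : (Fin n → ℝ) → ℝ)
    (hk : ContDiffOn ℝ (⊤ : ℕ∞) k M) (hkbar : ContDiffOn ℝ (⊤ : ℕ∞) kbar M)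
    -- the second determining equation `[Y,σ] + ½τσ + σ·C = 0`
    (hdet2 : ∀ x ∈ M, ∀ i, ∀ α, vfd Y (fun y => σ y i α) x
      - (∑ j, σ x j α * pd j (fun y => Y y i) x)
      + (1 / 2) * τ x * σ x i α + (∑ β, σ x i β * C x β α) = 0)
    -- `Y(k̄) = −k` on `M`
    (hstraight : ∀ x ∈ M, vfd Y kbar x = -(k x)) :
    ∀ x ∈ M, ∀ a,
      vfd Y (fun y => ∑ p, σ y p a * pd p kbar y) x
        + (1 / 2) * τ x * (∑ p, σ x p a * pd p kbar x)
        - (∑ b, C x a b * (∑ p, σ x p b * pd p kbar x))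
        + (∑ p, σ x p a * pd p k x) = 0 := by
  intro x hx a
  have hxM : M ∈ 𝓝 x := hM.mem_nhds hx
  have dAt : ∀ {f : (Fin n → ℝ) → ℝ}, ContDiffOn ℝ (⊤ : ℕ∞) f M → DifferentiableAt ℝ f x :=
    fun hf => (hf.differentiableOn (by simp)).differentiableAt hxM
  have hpdkb : ∀ p : Fin n, ContDiffOn ℝ (⊤ : ℕ∞) (pd p kbar) M :=
    fun p => pd_smooth hM hkbar p
  -- E2 : differentiating the straightening equation
  have E2 : ∀ p : Fin n, ∑ j, Y x j * pd j (pd p kbar) x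
      = - pd p k x - ∑ j, pd p (fun y => Y y j) x * pd j kbar x := by
    intro p
    have heq : (fun y => ∑ j, Y y j * pd j kbar y) =ᶠ[𝓝 x] (fun y => -(k y)) := by
      filter_upwards [hxM] with y hy
      simpa [vfd] using hstraight y hy
    have h1 : pd p (fun y => ∑ j, Y y j * pd j kbar y) x = - pd p k x := by
      rw [pd_congr_nhds heq, pd_neg]
    rw [pd_sum p (fun j y => Y y j * pd j kbar y) x (fun j => (dAt (hY j)).mul (dAt (hpdkb j)))] at h1
    have h2 : ∀ j : Fin n, pd p (fun y => Y y j * pd j kbar y) x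
        = pd p (fun y => Y y j) x * pd j kbar x + Y x j * pd j (pd p kbar) x := by
      intro j
      rw [pd_mul p _ _ x (dAt (hY j)) (dAt (hpdkb j)), pd_comm hM hkbar hx p j]
    rw [Finset.sum_congr rfl (fun j _ => h2 j), Finset.sum_add_distrib] at h1
    linarith
  -- E1 : the second determining equation rearranged
  have E1 : ∀ p : Fin n, ∑ j, Y x j * pd j (fun y => σ y p a) x
      = (∑ j, σ x j a * pd j (fun y => Y y p) x)
        - (1 / 2) * τ x * σ x p a - (∑ β, σ x p β * C x β a) := by
    intro p
    have := hdet2 x hx p a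
    simp only [vfd] at this
    linarith
  -- expand the main vector-field derivative
  have hpdH : ∀ j : Fin n, pd j (fun y => ∑ p, σ y p a * pd p kbar y) x
      = ∑ p, (pd j (fun y => σ y p a) x * pd p kbar x + σ x p a * pd j (pd p kbar) x) := by
    intro j
    rw [pd_sum j (fun p y => σ y p a * pd p kbar y) x (fun p => (dAt (hσ p a)).mul (dAt (hpdkb p)))]
    exact Finset.sum_congr rfl fun p _ =>
      pd_mul j _ _ x (dAt (hσ p a)) (dAt (hpdkb p))
  have hexp : vfd Y (fun y => ∑ p, σ y p a * pd p kbar y) x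
      = ∑ p, ((∑ j, Y x j * pd j (fun y => σ y p a) x) * pd p kbar x)
        + ∑ p, (σ x p a * (∑ j, Y x j * pd j (pd p kbar) x)) := by
    simp only [vfd]
    calc ∑ j, Y x j * pd j (fun y => ∑ p, σ y p a * pd p kbar y) x
        = ∑ j, ∑ p, (Y x j * pd j (fun y => σ y p a) x * pd p kbar x
            + σ x p a * (Y x j * pd j (pd p kbar) x)) := by
          refine Finset.sum_congr rfl fun j _ => ?_
          rw [hpdH j, Finset.mul_sum]
          exact Finset.sum_congr rfl fun p _ => by ring
      _ = ∑ p, ∑ j, (Y x j * pd j (fun y => σ y p a) x * pd p kbar x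
            + σ x p a * (Y x j * pd j (pd p kbar) x)) := Finset.sum_comm
      _ = _ := by
          rw [← Finset.sum_add_distrib]
          refine Finset.sum_congr rfl fun p _ => ?_
          rw [Finset.sum_add_distrib, Finset.sum_mul, Finset.mul_sum]
  -- substitute E1 and E2
  have hG : vfd Y (fun y => ∑ p, σ y p a * pd p kbar y) x
      = (∑ p, ∑ j, σ x j a * pd j (fun y => Y y p) x * pd p kbar x)
        - (1 / 2) * τ x * (∑ p, σ x p a * pd p kbar x)
        - (∑ p, (∑ β, σ x p β * C x β a) * pd p kbar x)
        - (∑ p, σ x p a * pd p k x)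
        - (∑ p, ∑ j, σ x p a * (pd p (fun y => Y y j) x * pd j kbar x)) := by
    rw [hexp]
    have hA : ∑ p, ((∑ j, Y x j * pd j (fun y => σ y p a) x) * pd p kbar x)
        = (∑ p, ∑ j, σ x j a * pd j (fun y => Y y p) x * pd p kbar x)
          - (1 / 2) * τ x * (∑ p, σ x p a * pd p kbar x)
          - (∑ p, (∑ β, σ x p β * C x β a) * pd p kbar x) := by
      rw [Finset.mul_sum, ← Finset.sum_sub_distrib, ← Finset.sum_sub_distrib]
      refine Finset.sum_congr rfl fun p _ => ?_
      rw [E1 p, sub_mul, sub_mul, Finset.sum_mul, Finset.sum_mul]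
      ring
    have hB : ∑ p, (σ x p a * (∑ j, Y x j * pd j (pd p kbar) x))
        = - (∑ p, σ x p a * pd p k x)
          - (∑ p, ∑ j, σ x p a * (pd p (fun y => Y y j) x * pd j kbar x)) := by
      calc ∑ p, (σ x p a * (∑ j, Y x j * pd j (pd p kbar) x))
          = ∑ p, (-(σ x p a * pd p k x)
              - ∑ j, σ x p a * (pd p (fun y => Y y j) x * pd j kbar x)) := by
            refine Finset.sum_congr rfl fun p _ => ?_
            rw [E2 p, mul_sub, mul_neg, Finset.mul_sum]
        _ = (∑ p, -(σ x p a * pd p k x))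
              - ∑ p, ∑ j, σ x p a * (pd p (fun y => Y y j) x * pd j kbar x) :=
            Finset.sum_sub_distrib _ _
        _ = _ := by rw [Finset.sum_neg_distrib]
    rw [hA, hB]
    ring
  have hT : (∑ p, ∑ j, σ x j a * pd j (fun y => Y y p) x * pd p kbar x)
      = ∑ p, ∑ j, σ x p a * (pd p (fun y => Y y j) x * pd j kbar x) := by
    rw [Finset.sum_comm]
    exact Finset.sum_congr rfl fun p _ => Finset.sum_congr rfl fun j _ => by ring
  have hCC : (∑ p, (∑ β, σ x p β * C x β a) * pd p kbar x)
      = - ∑ b, C x a b * (∑ p, σ x p b * pd p kbar x) := by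
    have hCab : ∀ b, C x b a = -(C x a b) := fun b => by
      have := congrFun (congrFun (hC x hx) a) b
      simpa [Matrix.transpose_apply, Matrix.neg_apply] using this
    calc ∑ p, (∑ β, σ x p β * C x β a) * pd p kbar x
        = ∑ p, ∑ b, σ x p b * C x b a * pd p kbar x :=
          Finset.sum_congr rfl fun p _ => by rw [Finset.sum_mul]
      _ = ∑ b, ∑ p, σ x p b * C x b a * pd p kbar x := Finset.sum_comm
      _ = ∑ b, -(C x a b * (∑ p, σ x p b * pd p kbar x)) := by
          refine Finset.sum_congr rfl fun b _ => ?_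
          rw [hCab b, Finset.mul_sum, ← Finset.sum_neg_distrib]
          exact Finset.sum_congr rfl fun p _ => by ring
      _ = _ := Finset.sum_neg_distrib _
  linarith [hG, hT, hCC]
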